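/- arXiv:2311.07610 — 4 statements merged into one kernel-verified Lean document; each statement's English description precedes it below -/
import Mathlib

section
/- For every positive integer n and integer t, n·∑_{k=1}^{⌊n/2⌋} ((-1)^{k-1}/k)·C(n-k-1, k-1)·L_{n-2k+t} equals L_{n+t} - (-1)^n·2·L_t if n ≡ 0 (mod 5); equals L_{n+t} + (-1)^n·L_{t+1} if n ≡ 1 or 4 (mod 5); and equals L_{n+t} - (-1)^n·L_{t-1} if n ≡ 2 or 3 (mod 5). -/
open Finset Real

/-- Fibonacci numbers extended to integer indices. -/
def fibZ (n : ℤ) : ℤ :=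
  if 0 ≤ n then (Nat.fib n.toNat : ℤ)
  else (-1) ^ ((-n).toNat + 1) * (Nat.fib (-n).toNat : ℤ)

/-- Lucas numbers on natural indices. -/
def lucasNat : ℕ → ℤ
  | 0 => 2
  | 1 => 1
  | n + 2 => lucasNat (n + 1) + lucasNat n

/-- Lucas numbers extended to integer indices. -/
def lucasZ (n : ℤ) : ℤ :=
  if 0 ≤ n then lucasNat n.toNat
  else (-1) ^ (-n).toNat * lucasNat (-n).toNat

noncomputable def gold : ℝ := (1 + Real.sqrt 5) / 2
noncomputable def gold' : ℝ := (1 - Real.sqrt 5) / 2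


lemma sqrt5_sq : Real.sqrt 5 ^ 2 = 5 := Real.sq_sqrt (by norm_num)
lemma gold_add : gold + gold' = 1 := by unfold gold gold'; ring
lemma gold_mul : gold * gold' = -1 := by
  unfold gold gold'; linear_combination (-1/4) * sqrt5_sq
lemma goldSq : gold ^ 2 = gold + 1 := by
  unfold gold; linear_combination sqrt5_sq / 4
lemma gold'Sq : gold' ^ 2 = gold' + 1 := by
  unfold gold'; linear_combination sqrt5_sq / 4
lemma gold_ne : gold ≠ 0 := by
  intro h; have := gold_mul; rw [h] at this; simp at this
lemma gold'_ne : gold' ≠ 0 := by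
  intro h; have := gold_mul; rw [h] at this; simp at this
lemma gold_inv : gold⁻¹ = -gold' :=
  inv_eq_of_mul_eq_one_right (by linear_combination -gold_mul)
lemma gold'_inv : gold'⁻¹ = -gold :=
  inv_eq_of_mul_eq_one_right (by linear_combination -gold_mul)


lemma lucasNat_real : ∀ k : ℕ, (lucasNat k : ℝ) = gold ^ k + gold' ^ k
  | 0 => by simp [lucasNat]; norm_num
  | 1 => by simp [lucasNat]; linarith [gold_add]
  | (k+2) => by
      show ((lucasNat (k+1) + lucasNat k : ℤ) : ℝ) = _
      push_cast
      rw [lucasNat_real (k+1), lucasNat_real k]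
      have h1 : gold ^ (k+2) = gold ^ k * gold ^ 2 := by ring
      have h2 : gold' ^ (k+2) = gold' ^ k * gold' ^ 2 := by ring
      rw [h1, h2, goldSq, gold'Sq]; ring

lemma lucasZ_real (m : ℤ) : (lucasZ m : ℝ) = gold ^ m + gold' ^ m := by
  rcases le_or_gt 0 m with h | h
  · lift m to ℕ using h
    rw [lucasZ, if_pos (by positivity)]
    rw [Int.toNat_natCast, lucasNat_real, zpow_natCast, zpow_natCast]
  · rw [lucasZ, if_neg (by omega)]
    have hm : m = -((-m).toNat : ℤ) := by omega
    set j := (-m).toNat with hj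
    rw [hm]
    push_cast
    rw [zpow_neg, zpow_neg, zpow_natCast, zpow_natCast, ← inv_pow, ← inv_pow,
      gold_inv, gold'_inv, lucasNat_real]
    ring


noncomputable def Ac (n k : ℕ) : ℝ :=
  (-1:ℝ)^(k-1) * ((n:ℝ) / (k:ℝ)) * (Nat.choose (n - k - 1) (k - 1) : ℝ)

noncomputable def fR (x : ℝ) (n : ℕ) : ℝ :=
  ∑ k ∈ Finset.Icc 1 (n/2), Ac n k * x ^ (n - 2*k)

lemma Ac_zero (n k : ℕ) (hk : 2 ≤ k) (h : n < 2*k) : Ac n k = 0 := by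
  unfold Ac
  have : Nat.choose (n - k - 1) (k - 1) = 0 := by
    apply Nat.choose_eq_zero_of_lt; omega
  rw [this]; simp

lemma Ac_zero' (n : ℕ) : Ac n 0 = 0 := by unfold Ac; simp

lemma fR_ext (x : ℝ) (n M : ℕ) (h2 : 2 ≤ n) (hM : n/2 ≤ M) :
    fR x n = ∑ k ∈ Finset.Icc 1 M, Ac n k * x ^ (n - 2*k) := by
  unfold fR
  apply Finset.sum_subset
  · intro k hk; simp only [Finset.mem_Icc] at *; omega
  · intro k hk hk2
    simp only [Finset.mem_Icc] at hk hk2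
    rw [Ac_zero n k (by omega) (by omega)]; ring

-- coefficient identity
lemma coeff_id (n k : ℕ) (hk : 2 ≤ k) (hkn : 2*k ≤ n + 2) :
    ((n:ℝ)+2) / k * (Nat.choose (n+1-k) (k-1) : ℝ)
      = ((n:ℝ)+1) / k * (Nat.choose (n-k) (k-1) : ℝ)
        + (n:ℝ) / ((k:ℝ)-1) * (Nat.choose (n-k) (k-2) : ℝ) := by
  have hkn' : k ≤ n := by omega
  have hp : Nat.choose (n+1-k) (k-1) = Nat.choose (n-k) (k-2) + Nat.choose (n-k) (k-1) := by
    have h1 : n+1-k = (n-k)+1 := by omega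
    have h2 : k-1 = (k-2)+1 := by omega
    rw [h1, h2, Nat.choose_succ_succ]
  have hr : Nat.choose (n-k) (k-1) * (k-1) = Nat.choose (n-k) (k-2) * (n - k - (k-2)) := by
    have h2 : k-1 = (k-2)+1 := by omega
    rw [h2, Nat.choose_succ_right_eq]
  have hk0 : (k:ℝ) ≠ 0 := by positivity
  have hk1 : (k:ℝ) - 1 ≠ 0 := by
    have : (2:ℝ) ≤ k := by exact_mod_cast hk
    linarith
  have hc1 : ((n - k - (k-2) : ℕ) : ℝ) = (n:ℝ) - 2*(k:ℝ) + 2 := by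
    rw [Nat.cast_sub (by omega), Nat.cast_sub (by omega), Nat.cast_sub (by omega)]
    push_cast; ring
  have hc2 : (((k-1) : ℕ) : ℝ) = (k:ℝ) - 1 := by
    rw [Nat.cast_sub (by omega)]; norm_num
  have hrR : (Nat.choose (n-k) (k-1) : ℝ) * ((k:ℝ)-1)
      = (Nat.choose (n-k) (k-2) : ℝ) * ((n:ℝ)-2*(k:ℝ)+2) := by
    have h := congrArg (Nat.cast : ℕ → ℝ) hr
    rw [Nat.cast_mul, Nat.cast_mul, hc1, hc2] at h
    exact h
  rw [hp]
  push_cast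
  field_simp
  nlinarith [hrR]

lemma Ac_rec (n k : ℕ) (hk : 2 ≤ k) (hkn : 2*k ≤ n+2) :
    Ac (n+2) k = Ac (n+1) k - Ac n (k-1) := by
  unfold Ac
  have e1 : n+2-k-1 = n+1-k := by omega
  have e2 : n+1-k-1 = n-k := by omega
  have e3 : n-(k-1)-1 = n-k := by omega
  have e4 : (k-1)-1 = k-2 := by omega
  have e5 : (-1:ℝ)^(k-1) = -(-1:ℝ)^(k-2) := by
    rw [show k-1 = (k-2)+1 by omega, pow_succ]; ring
  have e6 : (((k-1):ℕ):ℝ) = (k:ℝ)-1 := by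
    rw [Nat.cast_sub (by omega)]; norm_num
  rw [e1, e2, e3, e4, e5, e6]
  push_cast
  linear_combination (-(-1:ℝ)^(k-2)) * coeff_id n k hk hkn

lemma fR_rec (x : ℝ) (n : ℕ) (hn : 1 ≤ n) :
    fR x (n+2) = x * fR x (n+1) - fR x n + x ^ n := by
  rcases eq_or_lt_of_le hn with h1 | h2
  · -- n = 1
    subst h1
    unfold fR
    rw [show Finset.Icc 1 ((1+2)/2) = {1} from rfl,
      show Finset.Icc 1 (1/2) = (∅ : Finset ℕ) from rfl]
    simp [Ac]
    ring
  · have hn2 : 2 ≤ n := h2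
    set m := n/2 + 1 with hmdef
    have hS1 : (1:ℕ) ∈ Finset.Icc 1 m := by simp [hmdef]
    have e1 : fR x (n+2) = ∑ k ∈ Finset.Icc 1 m, Ac (n+2) k * x ^ (n+2 - 2*k) := by
      unfold fR; rw [show (n+2)/2 = m by omega]
    have e2 : x * fR x (n+1) = ∑ k ∈ Finset.Icc 1 m, x * (Ac (n+1) k * x ^ (n+1 - 2*k)) := by
      rw [fR_ext x (n+1) m (by omega) (by omega), Finset.mul_sum]
    have e3 : fR x n = ∑ k ∈ Finset.Icc 1 m, Ac n (k-1) * x ^ (n - 2*(k-1)) := by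
      unfold fR
      have hmap : Finset.Icc 2 m = Finset.map (addRightEmbedding 1) (Finset.Icc 1 (n/2)) := by
        rw [Finset.map_add_right_Icc]
      have hins : Finset.Icc 1 m = insert 1 (Finset.Icc 2 m) := by
        ext a; simp only [Finset.mem_Icc, Finset.mem_insert]; omega
      rw [hins, Finset.sum_insert (by simp), hmap, Finset.sum_map]
      simp only [addRightEmbedding_apply, Nat.add_sub_cancel]
      norm_num [Ac_zero']
    have e4 : (x^n : ℝ) = ∑ k ∈ Finset.Icc 1 m, (if k = 1 then x^n else (0:ℝ)) := by
      rw [Finset.sum_ite_eq' (Finset.Icc 1 m) 1 (fun _ => x^n), if_pos hS1]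
    rw [e1, e2, e3, e4, ← Finset.sum_sub_distrib, ← Finset.sum_add_distrib]
    apply Finset.sum_congr rfl
    intro k hk
    simp only [Finset.mem_Icc] at hk
    by_cases hk1 : k = 1
    · subst hk1
      rw [if_pos rfl]
      have c1 : Ac (n+2) 1 = (n:ℝ)+2 := by
        unfold Ac; simp
      have c2 : Ac (n+1) 1 = (n:ℝ)+1 := by
        unfold Ac; simp
      rw [show (1:ℕ)-1 = 0 by rfl, Ac_zero', c1, c2, show n+2-2*1 = n by omega,
        show n+1-2*1 = (n-1) by omega]
      have hx : x * x^(n-1) = x^n := by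
        rw [← pow_succ']; congr 1; omega
      rw [← hx]; ring
    · have hk2 : 2 ≤ k := by omega
      have hkn : 2*k ≤ n+2 := by omega
      rw [if_neg hk1, Ac_rec n k hk2 hkn]
      by_cases hb : 2*k ≤ n+1
      · rw [show n-2*(k-1) = n+2-2*k by omega, show n+2-2*k = (n+1-2*k)+1 by omega, pow_succ]
        ring
      · have h0 : Ac (n+1) k = 0 := Ac_zero (n+1) k hk2 (by omega)
        rw [h0, show n-2*(k-1) = n+2-2*k by omega]
        ring

noncomputable def T (x : ℝ) (r : ℕ) : ℝ :=
  match r % 10 with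
  | 0 => 2 | 1 => x | 2 => x - 1 | 3 => 1 - x | 4 => -x
  | 5 => -2 | 6 => -x | 7 => 1 - x | 8 => x - 1 | _ => x

lemma T_rec (x : ℝ) (hx : x^2 = x + 1) (n : ℕ) : T x (n+2) = x * T x (n+1) - T x n := by
  unfold T
  have h2 : (n+2) % 10 = (n % 10 + 2) % 10 := by omega
  have h1 : (n+1) % 10 = (n % 10 + 1) % 10 := by omega
  rw [h2, h1]
  have hlt : n % 10 < 10 := Nat.mod_lt _ (by norm_num)
  set r := n % 10 with hr
  clear_value r
  interval_cases r <;> norm_num <;> linarith [hx]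

lemma pow_sub_fR (x : ℝ) (hx : x^2 = x+1) : ∀ n : ℕ, 1 ≤ n → x^n - fR x n = T x n := by
  have key : ∀ j : ℕ, (x^(j+1) - fR x (j+1) = T x (j+1)) ∧ (x^(j+2) - fR x (j+2) = T x (j+2)) := by
    intro j
    induction j with
    | zero =>
      constructor
      · unfold fR
        rw [show Finset.Icc 1 (1/2) = (∅ : Finset ℕ) from rfl]
        simp [T]
      · unfold fR
        rw [show Finset.Icc 1 (2/2) = {1} from rfl]
        simp [T, Ac]
        linarith [hx]
    | succ j ih =>
      refine ⟨ih.2, ?_⟩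
      have hrec := fR_rec x (j+1) (by omega)
      have htr := T_rec x hx (j+1)
      have e : x^(j+3) = x * x^(j+2) - x^(j+1) + x^(j+1) := by ring
      calc x^(j+3) - fR x (j+3)
          = x * (x^(j+2) - fR x (j+2)) - (x^(j+1) - fR x (j+1)) := by
            rw [show j+1+2 = j+3 from rfl] at hrec
            rw [hrec]; ring
        _ = x * T x (j+2) - T x (j+1) := by rw [ih.1, ih.2]
        _ = T x (j+3) := by rw [show j+3 = (j+1)+2 from rfl, htr]
  intro n hn
  obtain ⟨j, rfl⟩ : ∃ j, n = j + 1 := ⟨n-1, by omega⟩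
  exact (key j).1

theorem stmt2 (n : ℕ) (hn : 0 < n) (t : ℤ) :
    (n : ℝ) * ∑ k ∈ Finset.Icc 1 (n / 2),
        (-1 : ℝ) ^ (k - 1) / k * (Nat.choose (n - k - 1) (k - 1) : ℝ) *
          (lucasZ ((n : ℤ) - 2 * k + t) : ℝ) =
      if n % 5 = 0 then (lucasZ ((n : ℤ) + t) : ℝ) - (-1 : ℝ) ^ n * 2 * (lucasZ t : ℝ)
      else if n % 5 = 1 ∨ n % 5 = 4 then
        (lucasZ ((n : ℤ) + t) : ℝ) + (-1 : ℝ) ^ n * (lucasZ (t + 1) : ℝ)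
      else (lucasZ ((n : ℤ) + t) : ℝ) - (-1 : ℝ) ^ n * (lucasZ (t - 1) : ℝ) := by
  have hg := pow_sub_fR gold goldSq n hn
  have hg' := pow_sub_fR gold' gold'Sq n hn
  have hL : (n : ℝ) * ∑ k ∈ Finset.Icc 1 (n / 2),
        (-1 : ℝ) ^ (k - 1) / k * (Nat.choose (n - k - 1) (k - 1) : ℝ) *
          (lucasZ ((n : ℤ) - 2 * k + t) : ℝ)
      = gold ^ t * fR gold n + gold' ^ t * fR gold' n := by
    unfold fR
    rw [Finset.mul_sum, Finset.mul_sum, Finset.mul_sum, ← Finset.sum_add_distrib]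
    apply Finset.sum_congr rfl
    intro k hk
    simp only [Finset.mem_Icc] at hk
    have h2k : 2*k ≤ n := by omega
    have hsplit : (n:ℤ) - 2*k + t = ((n - 2*k : ℕ) : ℤ) + t := by
      rw [Nat.cast_sub h2k]; push_cast; ring
    rw [lucasZ_real, hsplit, zpow_add₀ gold_ne, zpow_add₀ gold'_ne,
      zpow_natCast, zpow_natCast]
    unfold Ac
    have hk0 : (k:ℝ) ≠ 0 := by
      have : 1 ≤ k := hk.1
      positivity
    field_simp
  rw [hL]
  have e1 : fR gold n = gold^n - T gold n := by linarith
  have e2 : fR gold' n = gold'^n - T gold' n := by linarith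
  rw [e1, e2]
  have hLnt : (lucasZ ((n:ℤ)+t) : ℝ) = gold^t * gold^n + gold'^t * gold'^n := by
    rw [lucasZ_real, zpow_add₀ gold_ne, zpow_add₀ gold'_ne, zpow_natCast, zpow_natCast]
    ring
  have hLt : (lucasZ t : ℝ) = gold^t + gold'^t := lucasZ_real t
  have hLt1 : (lucasZ (t+1) : ℝ) = gold^t * gold + gold'^t * gold' := by
    rw [lucasZ_real, zpow_add_one₀ gold_ne, zpow_add_one₀ gold'_ne]
  have hLtm : (lucasZ (t-1) : ℝ) = gold^t * (-gold') + gold'^t * (-gold) := by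
    rw [lucasZ_real, zpow_sub_one₀ gold_ne, zpow_sub_one₀ gold'_ne, gold_inv, gold'_inv]
  have hrlt : n % 10 < 10 := by omega
  have hT : ∀ x : ℝ, T x n = T x (n % 10) := by
    intro x; unfold T; rw [show n % 10 % 10 = n % 10 by omega]
  rw [hT gold, hT gold']
  set r := n % 10 with hrdef
  have hmod5 : n % 5 = r % 5 := by omega
  have hmod2 : n % 2 = r % 2 := by omega
  clear_value r
  interval_cases r
  · rw [show T gold 0 = 2 from rfl, show T gold' 0 = 2 from rfl,
      if_pos (show n % 5 = 0 by omega)]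
    have he : Even n := Nat.even_iff.mpr (by omega)
    rw [hLnt, hLt, he.neg_one_pow]; ring
  · rw [show T gold 1 = gold from rfl, show T gold' 1 = gold' from rfl,
      if_neg (show ¬ n % 5 = 0 by omega), if_pos (show n % 5 = 1 ∨ n % 5 = 4 by omega)]
    have ho : Odd n := Nat.odd_iff.mpr (by omega)
    rw [hLnt, hLt1, ho.neg_one_pow]; ring
  · rw [show T gold 2 = gold - 1 from rfl, show T gold' 2 = gold' - 1 from rfl,
      if_neg (show ¬ n % 5 = 0 by omega), if_neg (show ¬ (n % 5 = 1 ∨ n % 5 = 4) by omega)]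
    have he : Even n := Nat.even_iff.mpr (by omega)
    rw [hLnt, hLtm, he.neg_one_pow]
    linear_combination (-(gold^t)-gold'^t) * gold_add
  · rw [show T gold 3 = 1 - gold from rfl, show T gold' 3 = 1 - gold' from rfl,
      if_neg (show ¬ n % 5 = 0 by omega), if_neg (show ¬ (n % 5 = 1 ∨ n % 5 = 4) by omega)]
    have ho : Odd n := Nat.odd_iff.mpr (by omega)
    rw [hLnt, hLtm, ho.neg_one_pow]
    linear_combination (gold^t + gold'^t) * gold_add
  · rw [show T gold 4 = -gold from rfl, show T gold' 4 = -gold' from rfl,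
      if_neg (show ¬ n % 5 = 0 by omega), if_pos (show n % 5 = 1 ∨ n % 5 = 4 by omega)]
    have he : Even n := Nat.even_iff.mpr (by omega)
    rw [hLnt, hLt1, he.neg_one_pow]; ring
  · rw [show T gold 5 = -2 from rfl, show T gold' 5 = -2 from rfl,
      if_pos (show n % 5 = 0 by omega)]
    have ho : Odd n := Nat.odd_iff.mpr (by omega)
    rw [hLnt, hLt, ho.neg_one_pow]; ring
  · rw [show T gold 6 = -gold from rfl, show T gold' 6 = -gold' from rfl,
      if_neg (show ¬ n % 5 = 0 by omega), if_pos (show n % 5 = 1 ∨ n % 5 = 4 by omega)]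
    have he : Even n := Nat.even_iff.mpr (by omega)
    rw [hLnt, hLt1, he.neg_one_pow]; ring
  · rw [show T gold 7 = 1 - gold from rfl, show T gold' 7 = 1 - gold' from rfl,
      if_neg (show ¬ n % 5 = 0 by omega), if_neg (show ¬ (n % 5 = 1 ∨ n % 5 = 4) by omega)]
    have ho : Odd n := Nat.odd_iff.mpr (by omega)
    rw [hLnt, hLtm, ho.neg_one_pow]
    linear_combination (gold^t + gold'^t) * gold_add
  · rw [show T gold 8 = gold - 1 from rfl, show T gold' 8 = gold' - 1 from rfl,
      if_neg (show ¬ n % 5 = 0 by omega), if_neg (show ¬ (n % 5 = 1 ∨ n % 5 = 4) by omega)]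
    have he : Even n := Nat.even_iff.mpr (by omega)
    rw [hLnt, hLtm, he.neg_one_pow]
    linear_combination (-(gold^t)-gold'^t) * gold_add
  · rw [show T gold 9 = gold from rfl, show T gold' 9 = gold' from rfl,
      if_neg (show ¬ n % 5 = 0 by omega), if_pos (show n % 5 = 1 ∨ n % 5 = 4 by omega)]
    have ho : Odd n := Nat.odd_iff.mpr (by omega)
    rw [hLnt, hLt1, ho.neg_one_pow]; ring
end

section
/- For every positive integer n, n·∑_{k=1}^{⌊n/2⌋} ((-1)^{k-1}/k)·C(n-k-1, k-1)·F_{2k} equals -2·F_n if n ≡ 0 (mod 5); equals -F_{n-1} if n ≡ 1 or 4 (mod 5); and equals F_{n+1} if n ≡ 2 or 3 (mod 5). -/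
open Finset Real

def Tz (n : ℕ) : ℤ :=
  ∑ k ∈ Finset.range (n+1), (-1)^(k+1) * ((n-k).choose k : ℤ) * (Nat.fib (2*k) : ℤ)

def Uz (n : ℕ) : ℤ :=
  ∑ k ∈ Finset.range (n+1), (-1)^k * ((n-k).choose k : ℤ) * (Nat.fib (2*k+2) : ℤ)

lemma dropLast (g : ℕ → ℤ) (N : ℕ) (h : g N = 0) :
    ∑ k ∈ Finset.range (N+1), g k = ∑ k ∈ Finset.range N, g k := by
  rw [Finset.sum_range_succ, h, add_zero]

lemma shiftSum (g : ℕ → ℤ) (N : ℕ) (h : g 0 = 0) :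
    ∑ k ∈ Finset.range (N+1), g k = ∑ j ∈ Finset.range N, g (j+1) := by
  rw [Finset.sum_range_succ', h, add_zero]

lemma shiftSum1 (g : ℕ → ℤ) (N : ℕ) :
    ∑ k ∈ Finset.range (N+1), g k = g 0 + ∑ j ∈ Finset.range N, g (j+1) := by
  rw [Finset.sum_range_succ', add_comm]

lemma pascalN (n j : ℕ) :
    (n+1-j).choose (j+1) = (n-j).choose (j+1) + (n-j).choose j := by
  rcases le_or_gt j n with h | h
  · rw [show n+1-j = (n-j)+1 by omega, Nat.choose_succ_succ, add_comm]
  · obtain ⟨i, rfl⟩ : ∃ i, j = i+1 := ⟨j-1, by omega⟩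
    rw [show n-(i+1) = 0 by omega, show n+1-(i+1) = 0 by omega]
    simp [Nat.choose_zero_succ]

lemma fib4 (m : ℕ) : (Nat.fib (m+4) : ℤ) = 3 * (Nat.fib (m+2) : ℤ) - (Nat.fib m : ℤ) := by
  have h1 := Nat.fib_add_two (n := m)
  have h2 := Nat.fib_add_two (n := m+1)
  have h3 := Nat.fib_add_two (n := m+2)
  push_cast [show m+1+2 = m+3 by ring, show m+2+2 = m+4 by ring] at h1 h2 h3 ⊢
  linarith

lemma Trec (n : ℕ) : Tz (n+2) = Tz (n+1) + Uz n := by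
  have e2 : Tz (n+2) = ∑ j ∈ Finset.range (n+2),
      (-1:ℤ)^j * ((n+1-j).choose (j+1) : ℤ) * (Nat.fib (2*j+2) : ℤ) := by
    rw [Tz, shiftSum _ _ (by simp)]
    refine Finset.sum_congr rfl fun j hj => ?_
    rw [show n+2-(j+1) = n+1-j by omega, show 2*(j+1) = 2*j+2 by ring]
    ring
  have e1 : Tz (n+1) = ∑ j ∈ Finset.range (n+2),
      (-1:ℤ)^j * ((n-j).choose (j+1) : ℤ) * (Nat.fib (2*j+2) : ℤ) := by
    rw [Tz, shiftSum _ _ (by simp),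
      dropLast (fun j => (-1:ℤ)^j * ((n-j).choose (j+1) : ℤ) * (Nat.fib (2*j+2) : ℤ)) (n+1)
        (by simp [show n-(n+1) = 0 by omega,
              Nat.choose_eq_zero_of_lt (show (0:ℕ) < n+2 by omega)])]
    refine Finset.sum_congr rfl fun j hj => ?_
    rw [show n+1-(j+1) = n-j by omega, show 2*(j+1) = 2*j+2 by ring]
    ring
  have e0 : Uz n = ∑ j ∈ Finset.range (n+2),
      (-1:ℤ)^j * ((n-j).choose j : ℤ) * (Nat.fib (2*j+2) : ℤ) := by
    rw [Uz,
      (dropLast (fun j => (-1:ℤ)^j * ((n-j).choose j : ℤ) * (Nat.fib (2*j+2) : ℤ)) (n+1)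
        (by simp [show n-(n+1) = 0 by omega,
              Nat.choose_eq_zero_of_lt (show (0:ℕ) < n+1 by omega)])).symm]
  rw [e2, e1, e0, ← Finset.sum_add_distrib]
  refine Finset.sum_congr rfl fun j hj => ?_
  rw [pascalN]
  push_cast
  ring

lemma Urec (n : ℕ) : Uz (n+2) = Uz (n+1) - 3 * Uz n - Tz n := by
  have e2 : Uz (n+2) = 1 + ∑ j ∈ Finset.range (n+2),
      (-1:ℤ)^(j+1) * ((n+1-j).choose (j+1) : ℤ) * (Nat.fib (2*j+4) : ℤ) := by
    rw [Uz, shiftSum1]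
    congr 1
    refine Finset.sum_congr rfl fun j hj => ?_
    rw [show n+2-(j+1) = n+1-j by omega, show 2*(j+1)+2 = 2*j+4 by ring]
  have e1 : Uz (n+1) = 1 + ∑ j ∈ Finset.range (n+2),
      (-1:ℤ)^(j+1) * ((n-j).choose (j+1) : ℤ) * (Nat.fib (2*j+4) : ℤ) := by
    rw [Uz, shiftSum1,
      dropLast (fun j => (-1:ℤ)^(j+1) * ((n-j).choose (j+1) : ℤ) * (Nat.fib (2*j+4) : ℤ)) (n+1)
        (by simp [show n-(n+1) = 0 by omega,
              Nat.choose_eq_zero_of_lt (show (0:ℕ) < n+2 by omega)])]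
    congr 1
    refine Finset.sum_congr rfl fun j hj => ?_
    rw [show n+1-(j+1) = n-j by omega, show 2*(j+1)+2 = 2*j+4 by ring]
  have e0 : Uz n = ∑ j ∈ Finset.range (n+2),
      (-1:ℤ)^j * ((n-j).choose j : ℤ) * (Nat.fib (2*j+2) : ℤ) := by
    rw [Uz,
      (dropLast (fun j => (-1:ℤ)^j * ((n-j).choose j : ℤ) * (Nat.fib (2*j+2) : ℤ)) (n+1)
        (by simp [show n-(n+1) = 0 by omega,
              Nat.choose_eq_zero_of_lt (show (0:ℕ) < n+1 by omega)])).symm]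
  have et : Tz n = ∑ j ∈ Finset.range (n+2),
      (-1:ℤ)^(j+1) * ((n-j).choose j : ℤ) * (Nat.fib (2*j) : ℤ) := by
    rw [Tz,
      (dropLast (fun j => (-1:ℤ)^(j+1) * ((n-j).choose j : ℤ) * (Nat.fib (2*j) : ℤ)) (n+1)
        (by simp [show n-(n+1) = 0 by omega,
              Nat.choose_eq_zero_of_lt (show (0:ℕ) < n+1 by omega)])).symm]
  rw [e2, e1, e0, et]
  have hA : (∑ j ∈ Finset.range (n+2),
        (-1:ℤ)^(j+1) * ((n+1-j).choose (j+1) : ℤ) * (Nat.fib (2*j+4) : ℤ)) =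
      (∑ j ∈ Finset.range (n+2),
        (-1:ℤ)^(j+1) * ((n-j).choose (j+1) : ℤ) * (Nat.fib (2*j+4) : ℤ))
      - 3 * (∑ j ∈ Finset.range (n+2),
        (-1:ℤ)^j * ((n-j).choose j : ℤ) * (Nat.fib (2*j+2) : ℤ))
      - (∑ j ∈ Finset.range (n+2),
        (-1:ℤ)^(j+1) * ((n-j).choose j : ℤ) * (Nat.fib (2*j) : ℤ)) := by
    rw [Finset.mul_sum, ← Finset.sum_sub_distrib, ← Finset.sum_sub_distrib]
    refine Finset.sum_congr rfl fun j hj => ?_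
    rw [pascalN, fib4 (2*j)]
    push_cast
    ring
  rw [hA]
  ring

def tA : ℕ → ℤ := fun r => if r = 0 then -1 else if r = 1 then 1 else if r = 2 then -1
  else if r = 3 then 1 else 0
def tB : ℕ → ℤ := fun r => if r = 0 then 0 else if r = 1 then -1 else if r = 2 then 1
  else if r = 3 then 0 else 0
def uA : ℕ → ℤ := fun r => if r = 0 then 1 else if r = 1 then 0 else if r = 2 then 0
  else if r = 3 then -1 else 0
def uB : ℕ → ℤ := fun r => if r = 0 then 1 else if r = 1 then 1 else if r = 2 then -1
  else if r = 3 then -1 else 0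

lemma key : ∀ n : ℕ,
    Tz n = tA (n % 5) * (Nat.fib n : ℤ) + tB (n % 5) * (Nat.fib (n+1) : ℤ) ∧
    Uz n = uA (n % 5) * (Nat.fib n : ℤ) + uB (n % 5) * (Nat.fib (n+1) : ℤ) := by
  have main : ∀ n : ℕ,
      (Tz n = tA (n % 5) * (Nat.fib n : ℤ) + tB (n % 5) * (Nat.fib (n+1) : ℤ) ∧
       Uz n = uA (n % 5) * (Nat.fib n : ℤ) + uB (n % 5) * (Nat.fib (n+1) : ℤ)) ∧
      (Tz (n+1) = tA ((n+1) % 5) * (Nat.fib (n+1) : ℤ) + tB ((n+1) % 5) * (Nat.fib (n+2) : ℤ) ∧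
       Uz (n+1) = uA ((n+1) % 5) * (Nat.fib (n+1) : ℤ) + uB ((n+1) % 5) * (Nat.fib (n+2) : ℤ)) := by
    intro n
    induction n with
    | zero =>
      refine ⟨⟨?_, ?_⟩, ?_, ?_⟩ <;>
        · simp [Tz, Uz, tA, tB, uA, uB, Finset.sum_range_succ]
          try norm_num
    | succ n ih =>
      have hf2 : (Nat.fib (n+2) : ℤ) = Nat.fib n + Nat.fib (n+1) := by
        rw [Nat.fib_add_two]; push_cast; ring
      have hf3 : (Nat.fib (n+3) : ℤ) = Nat.fib (n+1) + Nat.fib (n+2) := by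
        rw [show n+3 = (n+1)+2 by ring, Nat.fib_add_two]; push_cast; ring
      have h5 : n % 5 = 0 ∨ n % 5 = 1 ∨ n % 5 = 2 ∨ n % 5 = 3 ∨ n % 5 = 4 := by omega
      refine ⟨ih.2, ?_, ?_⟩ <;>
        simp only [show n+1+1 = n+2 from rfl, show n+1+2 = n+3 from rfl]
      · rw [Trec n, ih.2.1, ih.1.2]
        rcases h5 with h | h | h | h | h
        · rw [h, show (n+1) % 5 = 1 by omega, show (n+2) % 5 = 2 by omega]
          norm_num [tA, tB, uA, uB]
          try linarith
        · rw [h, show (n+1) % 5 = 2 by omega, show (n+2) % 5 = 3 by omega]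
          norm_num [tA, tB, uA, uB]
          try linarith
        · rw [h, show (n+1) % 5 = 3 by omega, show (n+2) % 5 = 4 by omega]
          norm_num [tA, tB, uA, uB]
          try linarith
        · rw [h, show (n+1) % 5 = 4 by omega, show (n+2) % 5 = 0 by omega]
          norm_num [tA, tB, uA, uB]
          try linarith
        · rw [h, show (n+1) % 5 = 0 by omega, show (n+2) % 5 = 1 by omega]
          norm_num [tA, tB, uA, uB]
          try linarith
      · rw [Urec n, ih.2.2, ih.1.2, ih.1.1]
        rcases h5 with h | h | h | h | h
        · rw [h, show (n+1) % 5 = 1 by omega, show (n+2) % 5 = 2 by omega]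
          norm_num [tA, tB, uA, uB]
          try linarith
        · rw [h, show (n+1) % 5 = 2 by omega, show (n+2) % 5 = 3 by omega]
          norm_num [tA, tB, uA, uB]
          try linarith
        · rw [h, show (n+1) % 5 = 3 by omega, show (n+2) % 5 = 4 by omega]
          norm_num [tA, tB, uA, uB]
          try linarith
        · rw [h, show (n+1) % 5 = 4 by omega, show (n+2) % 5 = 0 by omega]
          norm_num [tA, tB, uA, uB]
          try linarith
        · rw [h, show (n+1) % 5 = 0 by omega, show (n+2) % 5 = 1 by omega]
          norm_num [tA, tB, uA, uB]
          try linarith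
  exact fun n => (main n).1

theorem stmt4 (n : ℕ) (hn : 0 < n) :
    (n : ℝ) * ∑ k ∈ Finset.Icc 1 (n / 2),
        (-1 : ℝ) ^ (k - 1) / k * (Nat.choose (n - k - 1) (k - 1) : ℝ) * (Nat.fib (2 * k) : ℝ) =
      if n % 5 = 0 then -2 * (Nat.fib n : ℝ)
      else if n % 5 = 1 ∨ n % 5 = 4 then -(Nat.fib (n - 1) : ℝ)
      else (Nat.fib (n + 1) : ℝ) := by
  rcases n with _ | n
  · exact absurd hn (lt_irrefl 0)
  rcases n with _ | m
  · norm_num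
  have hgoal : ∀ p q : ℕ, p = m + 2 → q = m + 2 →
      (p : ℝ) * ∑ k ∈ Finset.Icc 1 (p / 2),
        (-1 : ℝ) ^ (k - 1) / k * (Nat.choose (p - k - 1) (k - 1) : ℝ) * (Nat.fib (2 * k) : ℝ) =
      if q % 5 = 0 then -2 * (Nat.fib q : ℝ)
      else if q % 5 = 1 ∨ q % 5 = 4 then -(Nat.fib (q - 1) : ℝ)
      else (Nat.fib (q + 1) : ℝ) := by
    rintro p q rfl rfl
    -- Step 2: the integer sum equals Tz (m+2) + Uz m
    have step2 : (∑ k ∈ Finset.Icc 1 ((m+2) / 2),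
        (-1:ℤ)^(k+1) * (((m+2-k).choose k : ℤ) + ((m+2-k-1).choose (k-1) : ℤ))
          * (Nat.fib (2*k) : ℤ)) = Tz (m+2) + Uz m := by
      have hsplit : (∑ k ∈ Finset.Icc 1 ((m+2) / 2),
          (-1:ℤ)^(k+1) * (((m+2-k).choose k : ℤ) + ((m+2-k-1).choose (k-1) : ℤ))
            * (Nat.fib (2*k) : ℤ)) =
          (∑ k ∈ Finset.Icc 1 ((m+2) / 2),
            (-1:ℤ)^(k+1) * ((m+2-k).choose k : ℤ) * (Nat.fib (2*k) : ℤ)) +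
          (∑ k ∈ Finset.Icc 1 ((m+2) / 2),
            (-1:ℤ)^(k+1) * ((m+2-k-1).choose (k-1) : ℤ) * (Nat.fib (2*k) : ℤ)) := by
        rw [← Finset.sum_add_distrib]
        exact Finset.sum_congr rfl fun k hk => by ring
      rw [hsplit]
      congr 1
      · -- first piece = Tz (m+2)
        rw [Tz]
        apply Finset.sum_subset
        · intro x hx
          rw [Finset.mem_Icc] at hx
          rw [Finset.mem_range]
          omega
        · intro x hx hx'
          rw [Finset.mem_range] at hx
          rw [Finset.mem_Icc] at hx'
          rcases Nat.eq_zero_or_pos x with rfl | hxpos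
          · simp
          · have h0 : (m+2-x).choose x = 0 := Nat.choose_eq_zero_of_lt (by omega)
            simp [h0]
      · -- second piece = Uz m
        rw [← Finset.Ico_add_one_right_eq_Icc, Finset.sum_Ico_eq_sum_range]
        rw [show (m+2)/2 + 1 - 1 = (m+2)/2 from rfl]
        have hcong : (∑ i ∈ Finset.range ((m+2)/2),
            (-1:ℤ)^(1+i+1) * ((m+2-(1+i)-1).choose (1+i-1) : ℤ) * (Nat.fib (2*(1+i)) : ℤ)) =
            ∑ i ∈ Finset.range ((m+2)/2),
            (-1:ℤ)^i * ((m-i).choose i : ℤ) * (Nat.fib (2*i+2) : ℤ) := by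
          refine Finset.sum_congr rfl fun i hi => ?_
          rw [Finset.mem_range] at hi
          rw [show m+2-(1+i)-1 = m-i by omega, show 1+i-1 = i by omega,
            show 2*(1+i) = 2*i+2 by ring,
            show (-1:ℤ)^(1+i+1) = (-1:ℤ)^i by
              rw [show 1+i+1 = i+2 by ring, pow_succ, pow_succ]; ring]
        rw [hcong, Uz]
        apply Finset.sum_subset
        · intro x hx
          rw [Finset.mem_range] at hx ⊢
          omega
        · intro x hx hx'
          rw [Finset.mem_range] at hx hx'
          push_neg at hx'
          have h0 : (m-x).choose x = 0 := Nat.choose_eq_zero_of_lt (by omega)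
          simp [h0]
    -- Step 1: real LHS equals the integer sum
    have step1 : ((m+2 : ℕ) : ℝ) * ∑ k ∈ Finset.Icc 1 ((m+2) / 2),
        (-1 : ℝ) ^ (k - 1) / k * (Nat.choose (m+2 - k - 1) (k - 1) : ℝ) * (Nat.fib (2 * k) : ℝ) =
        (((∑ k ∈ Finset.Icc 1 ((m+2) / 2),
          (-1:ℤ)^(k+1) * (((m+2-k).choose k : ℤ) + ((m+2-k-1).choose (k-1) : ℤ))
            * (Nat.fib (2*k) : ℤ)) : ℤ) : ℝ) := by
      rw [Finset.mul_sum]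
      push_cast
      refine Finset.sum_congr rfl fun k hk => ?_
      rw [Finset.mem_Icc] at hk
      obtain ⟨j, rfl⟩ : ∃ j, k = j + 1 := ⟨k - 1, by omega⟩
      have h2k : 2 * (j+1) ≤ m + 2 := by omega
      have hs := Nat.add_one_mul_choose_eq (m+1-j-1) j
      rw [show m+1-j-1+1 = m+1-j by omega] at hs
      have hs' : ((m+1-j : ℕ) : ℝ) * ((m+1-j-1).choose j : ℝ) =
          ((m+1-j).choose (j+1) : ℝ) * ((j:ℝ)+1) := by exact_mod_cast hs
      have hcast : ((m+1-j : ℕ) : ℝ) = (m:ℝ) + 1 - (j:ℝ) := by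
        rw [Nat.cast_sub (by omega)]; push_cast; ring
      rw [hcast] at hs'
      have hj1 : (j:ℝ) + 1 ≠ 0 := by positivity
      simp only [show m+2-(j+1) = m+1-j by omega, Nat.add_sub_cancel,
        show (-1:ℝ)^(j+1+1) = (-1:ℝ)^j from by rw [pow_succ, pow_succ]; ring]
      push_cast
      field_simp
      linear_combination hs'
    rw [step1, step2]
    obtain ⟨hT, -⟩ := key (m+2)
    obtain ⟨-, hU⟩ := key m
    have hf2 : (Nat.fib (m+2) : ℝ) = Nat.fib m + Nat.fib (m+1) := by
      rw [Nat.fib_add_two]; push_cast; ring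
    have hf3 : (Nat.fib (m+3) : ℝ) = Nat.fib (m+1) + Nat.fib (m+2) := by
      rw [show m+3 = (m+1)+2 by ring, Nat.fib_add_two]; push_cast; ring
    have h5 : m % 5 = 0 ∨ m % 5 = 1 ∨ m % 5 = 2 ∨ m % 5 = 3 ∨ m % 5 = 4 := by omega
    rw [show m+2-1 = m+1 from rfl, show m+2+1 = m+3 from rfl]
    rcases h5 with h | h | h | h | h
    · rw [show (m+2) % 5 = 2 by omega] at hT ⊢
      rw [h] at hU
      norm_num [tA, tB, uA, uB] at hT hU ⊢
      try simp only [show m+2+1 = m+3 from rfl] at hT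
      rw [hT, hU]
      push_cast
      linarith
    · rw [show (m+2) % 5 = 3 by omega] at hT ⊢
      rw [h] at hU
      norm_num [tA, tB, uA, uB] at hT hU ⊢
      try simp only [show m+2+1 = m+3 from rfl] at hT
      rw [hT, hU]
      push_cast
      linarith
    · rw [show (m+2) % 5 = 4 by omega] at hT ⊢
      rw [h] at hU
      norm_num [tA, tB, uA, uB] at hT hU ⊢
      try simp only [show m+2+1 = m+3 from rfl] at hT
      rw [hT, hU]
      push_cast
      linarith
    · rw [show (m+2) % 5 = 0 by omega] at hT ⊢
      rw [h] at hU
      norm_num [tA, tB, uA, uB] at hT hU ⊢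
      try simp only [show m+2+1 = m+3 from rfl] at hT
      rw [hT, hU]
      push_cast
      linarith
    · rw [show (m+2) % 5 = 1 by omega] at hT ⊢
      rw [h] at hU
      norm_num [tA, tB, uA, uB] at hT hU ⊢
      try simp only [show m+2+1 = m+3 from rfl] at hT
      rw [hT, hU]
      push_cast
      linarith
  exact hgoal _ _ rfl rfl
end

section
/- For every positive integer n and integer t, ∑_{k=0}^{⌊n/2⌋} (-1)^k·C(n-k, k)·L_{n-2k+t} equals (-1)^{⌊(n+1)/5⌋}·L_t if n ≡ 0 or 3 (mod 5); equals (-1)^{⌊(n+1)/5⌋}·L_{t+1} if n ≡ 1 or 2 (mod 5); and equals 0 if n ≡ 4 (mod 5). -/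
open Finset Real

lemma lucasZ_ofNat (m : ℕ) : lucasZ (m : ℤ) = lucasNat m := by
  simp [lucasZ]

lemma lucasZ_neg (m : ℕ) : lucasZ (-(m : ℤ)) = (-1) ^ m * lucasNat m := by
  cases m with
  | zero => simp [lucasZ]
  | succ k =>
    have h : ¬ (0 : ℤ) ≤ -((k+1 : ℕ) : ℤ) := by push_cast; omega
    simp only [lucasZ, if_neg h, neg_neg]
    norm_num

lemma lucasZ_rec (t : ℤ) : lucasZ (t + 2) = lucasZ (t + 1) + lucasZ t := by
  cases t with
  | ofNat m =>
    have h1 : (Int.ofNat m) + 2 = ((m + 2 : ℕ) : ℤ) := by simp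
    have h2 : (Int.ofNat m) + 1 = ((m + 1 : ℕ) : ℤ) := by simp
    have h3 : (Int.ofNat m) = ((m : ℕ) : ℤ) := rfl
    rw [h1, h2, h3, lucasZ_ofNat, lucasZ_ofNat, lucasZ_ofNat]
    rfl
  | negSucc m =>
    match m with
    | 0 => decide
    | 1 => decide
    | (k+2) =>
      have h1 : (Int.negSucc (k+2)) + 2 = -((k+1 : ℕ) : ℤ) := by
        rw [Int.negSucc_eq]; push_cast; ring
      have h2 : (Int.negSucc (k+2)) + 1 = -((k+2 : ℕ) : ℤ) := by
        rw [Int.negSucc_eq]; push_cast; ring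
      have h3 : (Int.negSucc (k+2)) = -((k+3 : ℕ) : ℤ) := by
        rw [Int.negSucc_eq]; push_cast; ring
      rw [h1, h2, h3, lucasZ_neg, lucasZ_neg, lucasZ_neg]
      have : lucasNat (k+3) = lucasNat (k+2) + lucasNat (k+1) := rfl
      rw [this]
      ring

def S (n : ℕ) (t : ℤ) : ℤ :=
  ∑ k ∈ Finset.range (n / 2 + 1),
    (-1 : ℤ) ^ k * (Nat.choose (n - k) k : ℤ) * lucasZ ((n : ℤ) - 2 * k + t)

lemma S_rec (n : ℕ) (t : ℤ) : S (n + 2) t = S (n + 1) (t + 1) - S n t := by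
  set g : ℕ → ℤ := fun k =>
    (-1 : ℤ) ^ k * (Nat.choose (n + 1 - k) k : ℤ) * lucasZ (((n + 1 : ℕ) : ℤ) - 2 * k + (t + 1))
    with hg
  set f : ℕ → ℤ := fun k =>
    (-1 : ℤ) ^ k * (Nat.choose (n - k) k : ℤ) * lucasZ ((n : ℤ) - 2 * k + t)
    with hf
  set h : ℕ → ℤ := fun k =>
    (-1 : ℤ) ^ k * (Nat.choose (n + 2 - k) k : ℤ) * lucasZ (((n + 2 : ℕ) : ℤ) - 2 * k + t)
    with hh
  have hSn : S n t = ∑ j ∈ Finset.range (n / 2 + 1), f j := rfl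
  have hS1 : S (n + 1) (t + 1) = ∑ k ∈ Finset.range ((n + 1) / 2 + 1), g k := rfl
  have hS2' : S (n + 2) t = ∑ k ∈ Finset.range ((n + 2) / 2 + 1), h k := rfl
  have hsplit : ∀ j ∈ Finset.range (n / 2 + 1), h (j + 1) = g (j + 1) - f j := by
    intro j hj
    rw [Finset.mem_range] at hj
    have hjn : j ≤ n := by omega
    have hchoose : n + 2 - (j + 1) = (n - j) + 1 := by omega
    have hchoose2 : n + 1 - (j + 1) = n - j := by omega
    simp only [hg, hf, hh, hchoose, hchoose2, Nat.choose_succ_succ (n - j) j]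
    have harg : ((n + 2 : ℕ) : ℤ) - 2 * ((j : ℕ) + 1 : ℕ) + t = (n : ℤ) - 2 * j + t := by
      push_cast; ring
    have harg2 : ((n + 1 : ℕ) : ℤ) - 2 * ((j : ℕ) + 1 : ℕ) + (t + 1) = (n : ℤ) - 2 * j + t := by
      push_cast; ring
    rw [harg, harg2]
    push_cast
    ring
  have hg0h0 : h 0 = g 0 := by
    simp only [hg, hh]
    norm_num
    congr 1
    push_cast
    ring
  have hr2 : (n + 2) / 2 + 1 = (n / 2 + 1) + 1 := by omega
  have hS2 : S (n + 2) t = (∑ j ∈ Finset.range (n / 2 + 1), (g (j + 1) - f j)) + g 0 := by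
    rw [hS2', hr2, Finset.sum_range_succ']
    rw [hg0h0]
    congr 1
    exact Finset.sum_congr rfl hsplit
  rw [hS2, Finset.sum_sub_distrib, hSn]
  have hSg : S (n + 1) (t + 1) = ∑ k ∈ Finset.range (n / 2 + 1), g (k + 1) + g 0 := by
    rw [hS1]
    rcases Nat.even_or_odd n with he | ho
    · have h1 : (n + 1) / 2 + 1 = n / 2 + 1 := by
        obtain ⟨m, hm⟩ := he; omega
      have hz : g (n / 2 + 1) = 0 := by
        have h2 : n + 1 - (n / 2 + 1) = n / 2 := by omega
        simp only [hg, h2]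
        rw [Nat.choose_eq_zero_of_lt (by omega)]
        simp
      have h3 : ∑ k ∈ Finset.range (n / 2 + 1 + 1), g k
          = ∑ k ∈ Finset.range (n / 2 + 1), g k + g (n / 2 + 1) :=
        Finset.sum_range_succ g _
      rw [h1]
      have h4 : ∑ k ∈ Finset.range (n / 2 + 1 + 1), g k
          = ∑ k ∈ Finset.range (n / 2 + 1), g (k + 1) + g 0 :=
        Finset.sum_range_succ' g _
      rw [hz, add_zero] at h3
      rw [← h3, h4]
    · have h1 : (n + 1) / 2 + 1 = (n / 2 + 1) + 1 := by
        obtain ⟨m, hm⟩ := ho; omega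
      rw [h1, Finset.sum_range_succ']
  rw [hSg]
  ring

def R (n : ℕ) (t : ℤ) : ℤ :=
  if n % 5 = 0 ∨ n % 5 = 3 then (-1) ^ ((n + 1) / 5) * lucasZ t
  else if n % 5 = 1 ∨ n % 5 = 2 then (-1) ^ ((n + 1) / 5) * lucasZ (t + 1)
  else 0

lemma R_rec (n : ℕ) (t : ℤ) : R (n + 2) t = R (n + 1) (t + 1) - R n t := by
  have hlt : n % 5 < 5 := Nat.mod_lt _ (by norm_num)
  have hcases : n % 5 = 0 ∨ n % 5 = 1 ∨ n % 5 = 2 ∨ n % 5 = 3 ∨ n % 5 = 4 := by omega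
  have hrec := lucasZ_rec t
  have hrec1 := lucasZ_rec (t + 1)
  rcases hcases with h | h | h | h | h
  · have m2 : (n + 2) % 5 = 2 := by omega
    have m1 : (n + 1) % 5 = 1 := by omega
    have e2 : (n + 2 + 1) / 5 = (n + 1) / 5 := by omega
    have e1 : (n + 1 + 1) / 5 = (n + 1) / 5 := by omega
    simp only [R, m2, m1, h, e2, e1]
    norm_num
    have : t + 1 + 1 = t + 2 := by ring
    rw [this, hrec]
    ring
  · have m2 : (n + 2) % 5 = 3 := by omega
    have m1 : (n + 1) % 5 = 2 := by omega
    have e2 : (n + 2 + 1) / 5 = (n + 1) / 5 := by omega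
    have e1 : (n + 1 + 1) / 5 = (n + 1) / 5 := by omega
    simp only [R, m2, m1, h, e2, e1]
    norm_num
    have : t + 1 + 1 = t + 2 := by ring
    rw [this, hrec]
    ring
  · have m2 : (n + 2) % 5 = 4 := by omega
    have m1 : (n + 1) % 5 = 3 := by omega
    have e1 : (n + 1 + 1) / 5 = (n + 1) / 5 := by omega
    simp only [R, m2, m1, h, e1]
    norm_num
  · have m2 : (n + 2) % 5 = 0 := by omega
    have m1 : (n + 1) % 5 = 4 := by omega
    have e2 : (n + 2 + 1) / 5 = (n + 1) / 5 + 1 := by omega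
    simp only [R, m2, m1, h, e2]
    norm_num
    ring
  · have m2 : (n + 2) % 5 = 1 := by omega
    have m1 : (n + 1) % 5 = 0 := by omega
    have e2 : (n + 2 + 1) / 5 = (n + 1) / 5 := by omega
    have e1 : (n + 1 + 1) / 5 = (n + 1) / 5 := by omega
    simp only [R, m2, m1, h, e2, e1]
    norm_num

lemma S_eq_R : ∀ n : ℕ, ∀ t : ℤ, S n t = R n t := by
  intro n
  induction n using Nat.strong_induction_on with
  | _ n ih =>
    match n with
    | 0 =>
      intro t
      simp [S, R, lucasZ]
    | 1 =>
      intro t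
      have : S 1 t = lucasZ (1 - 2 * 0 + t) := by
        simp [S]
      rw [this]
      have h1 : (1 : ℤ) - 2 * 0 + t = t + 1 := by ring
      rw [h1]
      simp [R]
    | (m + 2) =>
      intro t
      rw [S_rec, R_rec, ih (m + 1) (by omega), ih m (by omega)]

theorem stmt6 (n : ℕ) (hn : 0 < n) (t : ℤ) :
    ∑ k ∈ Finset.range (n / 2 + 1),
        (-1 : ℤ) ^ k * (Nat.choose (n - k) k : ℤ) * lucasZ ((n : ℤ) - 2 * k + t) =
      if n % 5 = 0 ∨ n % 5 = 3 then (-1) ^ ((n + 1) / 5) * lucasZ t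
      else if n % 5 = 1 ∨ n % 5 = 2 then (-1) ^ ((n + 1) / 5) * lucasZ (t + 1)
      else 0 := S_eq_R n t
end

section
/- For every positive integer n and integer t, ∑_{k=0}^{⌊n/2⌋} (-1)^{n-k}·(n/(n-k))·C(n-k, k)·F_{n-2k+t} equals 2·F_t if n ≡ 0 (mod 5); equals -F_{t+1} if n ≡ 1 or 4 (mod 5); and equals F_{t-1} if n ≡ 2 or 3 (mod 5). -/
open Finset Real

lemma fibZ_natCast (a : ℕ) : fibZ (a : ℤ) = Nat.fib a := by
  simp [fibZ]

lemma fibZ_neg_nat (j : ℕ) (hj : 0 < j) : fibZ (-(j : ℤ)) = (-1) ^ (j + 1) * Nat.fib j := by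
  have : ¬ (0 : ℤ) ≤ -(j : ℤ) := by omega
  simp [fibZ, this]

lemma fibZ_add_two (m : ℤ) : fibZ (m + 2) = fibZ (m + 1) + fibZ m := by
  rcases le_or_gt 0 m with h | h
  · obtain ⟨a, rfl⟩ := Int.eq_ofNat_of_zero_le h
    rw [show (a : ℤ) + 2 = ((a + 2 : ℕ) : ℤ) by push_cast; ring,
        show (a : ℤ) + 1 = ((a + 1 : ℕ) : ℤ) by push_cast; ring,
        fibZ_natCast, fibZ_natCast, fibZ_natCast, Nat.fib_add_two]
    push_cast; ring
  · obtain ⟨j, rfl⟩ : ∃ j : ℕ, m = -(j : ℤ) := ⟨m.natAbs, by omega⟩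
    have hj : 0 < j := by omega
    match j, hj with
    | 1, _ => decide
    | 2, _ => decide
    | (i+3), _ =>
      rw [show (-((i+3:ℕ):ℤ)) + 2 = -((i+1:ℕ):ℤ) by push_cast; ring,
          show (-((i+3:ℕ):ℤ)) + 1 = -((i+2:ℕ):ℤ) by push_cast; ring,
          fibZ_neg_nat (i+1) (by omega), fibZ_neg_nat (i+2) (by omega),
          fibZ_neg_nat (i+3) (by omega)]
      have hf : (Nat.fib (i+3) : ℤ) = Nat.fib (i+1) + Nat.fib (i+2) := by
        exact_mod_cast Nat.fib_add_two
      linear_combination (-(-1:ℤ) ^ i) * hf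

noncomputable def Ssum (n : ℕ) (t : ℤ) : ℝ :=
  ∑ k ∈ Finset.range (n / 2 + 1),
      (-1 : ℝ) ^ (n - k) * ((n : ℝ) / ((n : ℝ) - (k : ℝ))) * (Nat.choose (n - k) k : ℝ) *
        (fibZ ((n : ℤ) - 2 * k + t) : ℝ)

noncomputable def Rhs (n : ℕ) (t : ℤ) : ℝ :=
  if n % 5 = 0 then 2 * (fibZ t : ℝ)
  else if n % 5 = 1 ∨ n % 5 = 4 then -(fibZ (t + 1) : ℝ)
  else (fibZ (t - 1) : ℝ)

lemma keyId (n k : ℕ) (hn : 1 ≤ n) (hk : k ≤ n / 2) :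
    ((n:ℝ) + 2) / ((n:ℝ) + 2 - ((k:ℝ) + 1)) * (((n - k) + 1).choose (k+1) : ℝ) =
      ((n:ℝ) + 1) / ((n:ℝ) + 1 - ((k:ℝ) + 1)) * ((n - k).choose (k+1) : ℝ)
      + (n:ℝ) / ((n:ℝ) - k) * ((n - k).choose k : ℝ) := by
  have hkn : k + k ≤ n := by omega
  have h1 : (n:ℝ) - k ≠ 0 := by
    have : (k:ℝ) < n := by exact_mod_cast (by omega : k < n)
    linarith
  have h2 : (n:ℝ) + 2 - ((k:ℝ) + 1) ≠ 0 := by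
    have : (k:ℝ) < n + 1 := by exact_mod_cast (by omega : k < n + 1)
    linarith
  have h3 : (n:ℝ) + 1 - ((k:ℝ) + 1) ≠ 0 := by
    have : (k:ℝ) < n := by exact_mod_cast (by omega : k < n)
    linarith
  have pascal : (((n - k) + 1).choose (k+1) : ℝ)
      = ((n - k).choose k : ℝ) + ((n - k).choose (k+1) : ℝ) := by
    exact_mod_cast Nat.choose_succ_succ (n - k) k
  have absorb : ((n - k).choose (k+1) : ℝ) * ((k:ℝ) + 1)
      = ((n - k).choose k : ℝ) * ((n:ℝ) - 2 * k) := by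
    have h := Nat.choose_succ_right_eq (n - k) k
    have h3' : n - k - k = n - 2 * k := by omega
    rw [h3'] at h
    have := congrArg (fun x : ℕ => (x : ℝ)) h
    push_cast at this
    rw [this, Nat.cast_sub (by omega)]
    push_cast; ring
  rw [div_mul_eq_mul_div, div_mul_eq_mul_div, div_mul_eq_mul_div, div_add_div _ _ h3 h1,
    div_eq_div_iff h2 (mul_ne_zero h3 h1)]
  linear_combination (((n:ℝ) - k) * ((n:ℝ) + 2) * ((n:ℝ) - k)) * pascal - ((n:ℝ) - k) * absorb

lemma Srec (n : ℕ) (hn : 1 ≤ n) (t : ℤ) :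
    Ssum (n+2) t + Ssum (n+1) (t+1) + Ssum n t = 0 := by
  unfold Ssum
  rw [show (n+2)/2 = n/2 + 1 by omega]
  have ext : (∑ k ∈ Finset.range ((n+1)/2 + 1),
        (-1:ℝ) ^ (n + 1 - k) * (((n+1:ℕ) : ℝ) / (((n+1:ℕ) : ℝ) - (k : ℝ))) *
          (((n + 1 - k).choose k : ℕ) : ℝ) * ((fibZ (((n+1:ℕ) : ℤ) - 2 * (k:ℤ) + (t+1)) : ℤ) : ℝ))
      = ∑ k ∈ Finset.range (n/2 + 1 + 1),
        (-1:ℝ) ^ (n + 1 - k) * (((n+1:ℕ) : ℝ) / (((n+1:ℕ) : ℝ) - (k : ℝ))) *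
          (((n + 1 - k).choose k : ℕ) : ℝ) * ((fibZ (((n+1:ℕ) : ℤ) - 2 * (k:ℤ) + (t+1)) : ℤ) : ℝ) := by
    apply Finset.sum_subset (Finset.range_subset_range.mpr (by omega))
    intro x hx hx'
    simp only [Finset.mem_range] at hx hx'
    have hlt : n + 1 - x < x := by omega
    simp [Nat.choose_eq_zero_of_lt hlt]
  rw [ext, ← Finset.sum_add_distrib, Finset.sum_range_succ' _ (n/2+1), add_right_comm,
    ← Finset.sum_add_distrib]
  have hB : ((-1:ℝ) ^ (n + 2 - 0) * (((n+2:ℕ):ℝ) / (((n+2:ℕ):ℝ) - ((0:ℕ):ℝ))) *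
        (((n + 2 - 0).choose 0 : ℕ) : ℝ) * ((fibZ (((n+2:ℕ):ℤ) - 2 * ((0:ℕ):ℤ) + t) : ℤ) : ℝ) +
      (-1:ℝ) ^ (n + 1 - 0) * (((n+1:ℕ):ℝ) / (((n+1:ℕ):ℝ) - ((0:ℕ):ℝ))) *
        (((n + 1 - 0).choose 0 : ℕ) : ℝ) * ((fibZ (((n+1:ℕ):ℤ) - 2 * ((0:ℕ):ℤ) + (t+1)) : ℤ) : ℝ)) = 0 := by
    rw [show ((n+1:ℕ):ℤ) - 2 * ((0:ℕ):ℤ) + (t+1) = ((n+2:ℕ):ℤ) - 2 * ((0:ℕ):ℤ) + t by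
        push_cast; ring,
      show n+2-0 = (n+1)+1 from rfl, show n+1-0 = n+1 from rfl, pow_succ]
    have h2 : ((n+2:ℕ):ℝ) ≠ 0 := by positivity
    have h1 : ((n+1:ℕ):ℝ) ≠ 0 := by positivity
    simp only [Nat.choose_zero_right, Nat.cast_zero, sub_zero, Nat.cast_one, div_self h1,
      div_self h2]
    ring
  rw [hB, add_zero]
  apply Finset.sum_eq_zero
  intro k hk
  simp only [Finset.mem_range] at hk
  have hk' : k ≤ n / 2 := by omega
  rw [show n+2-(k+1) = (n-k)+1 by omega, show n+1-(k+1) = n-k by omega,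
    show ((n+2:ℕ):ℤ) - 2*((k+1:ℕ):ℤ) + t = (n:ℤ) - 2*(k:ℤ) + t by push_cast; ring,
    show ((n+1:ℕ):ℤ) - 2*((k+1:ℕ):ℤ) + (t+1) = (n:ℤ) - 2*(k:ℤ) + t by push_cast; ring,
    pow_succ]
  have key := keyId n k hn hk'
  push_cast
  linear_combination (-((-1:ℝ)^(n-k) * ((fibZ ((n:ℤ) - 2*(k:ℤ) + t) : ℤ) : ℝ))) * key

lemma Rrec (n : ℕ) (t : ℤ) : Rhs (n+2) t + Rhs (n+1) (t+1) + Rhs n t = 0 := by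
  have A : (fibZ (t+2) : ℝ) = (fibZ (t+1) : ℝ) + (fibZ t : ℝ) := by
    exact_mod_cast congrArg (fun z : ℤ => (z : ℝ)) (fibZ_add_two t)
  have B : (fibZ (t+1) : ℝ) = (fibZ t : ℝ) + (fibZ (t-1) : ℝ) := by
    have h := fibZ_add_two (t-1)
    rw [show t - 1 + 2 = t + 1 by ring, show t - 1 + 1 = t by ring] at h
    exact_mod_cast congrArg (fun z : ℤ => (z : ℝ)) h
  have h5 : n % 5 = 0 ∨ n % 5 = 1 ∨ n % 5 = 2 ∨ n % 5 = 3 ∨ n % 5 = 4 := by omega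
  rcases h5 with h | h | h | h | h <;>
  · have h1 : (n+1) % 5 = (n % 5 + 1) % 5 := by omega
    have h2 : (n+2) % 5 = (n % 5 + 2) % 5 := by omega
    norm_num [Rhs, h, h1, h2]
    try simp only [show t + 1 + 1 = t + 2 from by ring, show t + 1 - 1 = t from by ring]
    linarith [A, B]

lemma base1 (t : ℤ) : Ssum 1 t = Rhs 1 t := by
  rw [Ssum, Rhs]
  norm_num [Finset.sum_range_one]
  rw [show (1:ℤ) + t = t + 1 by ring]

lemma base2 (t : ℤ) : Ssum 2 t = Rhs 2 t := by
  rw [Ssum, Rhs]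
  norm_num [Finset.sum_range_succ, Finset.sum_range_one]
  rw [show (2:ℤ) + t = t + 2 by ring]
  have A : (fibZ (t+2) : ℝ) = (fibZ (t+1) : ℝ) + (fibZ t : ℝ) := by
    exact_mod_cast congrArg (fun z : ℤ => (z : ℝ)) (fibZ_add_two t)
  have B : (fibZ (t+1) : ℝ) = (fibZ t : ℝ) + (fibZ (t-1) : ℝ) := by
    have h := fibZ_add_two (t-1)
    rw [show t - 1 + 2 = t + 1 by ring, show t - 1 + 1 = t by ring] at h
    exact_mod_cast congrArg (fun z : ℤ => (z : ℝ)) h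
  linarith

lemma mainLemma (n : ℕ) : ∀ t : ℤ, Ssum (n+1) t = Rhs (n+1) t := by
  induction n using Nat.strong_induction_on with
  | _ n ih =>
    match n, ih with
    | 0, _ => exact base1
    | 1, _ => exact base2
    | (m+2), ih =>
      intro t
      have hS := Srec (m+1) (by omega) t
      have hR := Rrec (m+1) t
      have e1 := ih (m+1) (by omega) (t+1)
      have e2 := ih m (by omega) t
      have g1 : Ssum (m+1+2) t = Ssum (m+2+1) t := by norm_num
      have g2 : Rhs (m+1+2) t = Rhs (m+2+1) t := by norm_num
      have g3 : Ssum (m+1+1) (t+1) = Ssum (m+2) (t+1) := by norm_num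
      have g4 : Rhs (m+1+1) (t+1) = Rhs (m+2) (t+1) := by norm_num
      linarith [hS, hR, e1, e2, g1, g2, g3, g4]

theorem stmt9 (n : ℕ) (hn : 0 < n) (t : ℤ) :
    ∑ k ∈ Finset.range (n / 2 + 1),
        (-1 : ℝ) ^ (n - k) * ((n : ℝ) / ((n : ℝ) - (k : ℝ))) * (Nat.choose (n - k) k : ℝ) *
          (fibZ ((n : ℤ) - 2 * k + t) : ℝ) =
      if n % 5 = 0 then 2 * (fibZ t : ℝ)
      else if n % 5 = 1 ∨ n % 5 = 4 then -(fibZ (t + 1) : ℝ)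
      else (fibZ (t - 1) : ℝ) := by
  obtain ⟨m, rfl⟩ : ∃ m, n = m + 1 := ⟨n - 1, by omega⟩
  exact mainLemma m t
end
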